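/- Let A ⊆ ℤ_{>0} be a random set where each positive integer is included independently with probability p ∈ (0,1), and let u ≥ 2 be an even integer. Then E[F(⟨A ∩ [u,∞)⟩)] ≤ C(p^{−4} + u²) for an absolute constant C, where F denotes the Frobenius number. -/

import Mathlib

open MeasureTheory ProbabilityTheory
open scoped ENNReal
set_option maxHeartbeats 1000000

private lemma sum_odd_eq_sq (k : ℕ) : ∑ j ∈ Finset.range k, (2 * j + 1) = k * k := by
  induction k with
  | zero => simp
  | succ n ih => rw [Finset.sum_range_succ, ih]; ring

private lemma nugget {T : Set ℕ} {v n : ℕ} (hv : 1 ≤ v) (ha : 2 * v ∈ T)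
    (hb : 2 * v + 1 ∈ T) (hn : 2 * v * (2 * v) ≤ n) : n ∈ AddSubmonoid.closure T := by
  set a := 2 * v with ha'
  have h0 : 0 < a := by omega
  have hmod := Nat.div_add_mod n a
  set q := n / a with hq'
  set r := n % a with hr'
  have hr : r < a := Nat.mod_lt _ h0
  have hq : a ≤ q := by
    rw [hq', Nat.le_div_iff_mul_le h0]; exact hn
  obtain ⟨d, hd⟩ : ∃ d, q = r + d := ⟨q - r, by omega⟩
  have h2 : d * a + r * (a + 1) = a * (r + d) + r := by ring
  rw [hd] at hmod
  have hrep : n = d * a + r * (a + 1) := by linarith [hmod, h2]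
  have h1 : d • a + r • (a + 1) ∈ AddSubmonoid.closure T :=
    AddSubmonoid.add_mem _ (AddSubmonoid.nsmul_mem _ (AddSubmonoid.subset_closure ha) d)
      (AddSubmonoid.nsmul_mem _ (AddSubmonoid.subset_closure hb) r)
  simpa [smul_eq_mul, ← hrep] using h1

theorem stmt_19 :
    ∃ C : ℝ, 0 < C ∧
      ∀ (Ω : Type) (_ : MeasurableSpace Ω) (μ : Measure Ω), IsProbabilityMeasure μ →
      ∀ (p : ℝ), 0 < p → p < 1 →
      ∀ (A : Ω → Set ℕ),
        (∀ n : ℕ, MeasurableSet {ω | n ∈ A ω}) →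
        iIndepSet (fun n : ℕ => {ω | n ∈ A ω}) μ →
        (∀ n : ℕ, μ {ω | n ∈ A ω} = if 0 < n then ENNReal.ofReal p else 0) →
      ∀ (u : ℕ), 2 ≤ u → Even u →
        (∫ ω, ((sSup (insert (-1) ((fun n : ℕ => (n : ℤ)) ''
            ((AddSubmonoid.closure (A ω ∩ Set.Ici u) : Set ℕ))ᶜ)) : ℤ) : ℝ) ∂μ)
          ≤ C * (p ^ (-4 : ℤ) + (u : ℝ) ^ 2) := by
  refine ⟨16, by norm_num, ?_⟩
  intro Ω mΩ μ hμ p hp hp1 A hAm hInd hAp u hu hue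
  obtain ⟨m, hm⟩ := hue
  have hm1 : 1 ≤ m := by omega
  -- the target is nonnegative
  have htarget : (0 : ℝ) ≤ 16 * (p ^ (-4 : ℤ) + (u : ℝ) ^ 2) := by positivity
  set f : Ω → ℝ := fun ω => ((sSup (insert (-1) ((fun n : ℕ => (n : ℤ)) ''
      ((AddSubmonoid.closure (A ω ∩ Set.Ici u) : Set ℕ))ᶜ)) : ℤ) : ℝ) with hf
  -- pair success events
  set S : ℕ → Set Ω := fun k => {ω | 2 * (m + k) ∈ A ω} ∩ {ω | 2 * (m + k) + 1 ∈ A ω} with hSdef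
  have hSm : ∀ k, MeasurableSet (S k) := fun k => (hAm _).inter (hAm _)
  -- probability of single events
  have hWp : ∀ n : ℕ, 1 ≤ n → μ {ω | n ∈ A ω} = ENNReal.ofReal p := by
    intro n hn; rw [hAp n]; exact if_pos hn
  -- probability of pair events
  have hq0 : (0:ℝ) ≤ 1 - p * p := by nlinarith
  have hpp1 : p * p ≤ 1 := by nlinarith
  set q₀ : ℝ := 1 - p * p with hq₀def
  set qe : ℝ≥0∞ := ENNReal.ofReal q₀ with hqedef
  have hqe1 : qe < 1 := by
    rw [hqedef]
    apply ENNReal.ofReal_lt_one.2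
    nlinarith
  have hSk : ∀ k, μ (S k) = ENNReal.ofReal (p * p) := by
    intro k
    have hne : (2 * (m + k) : ℕ) ∉ ({2 * (m + k) + 1} : Finset ℕ) := by simp
    have h := hInd.meas_biInter ({2 * (m + k), 2 * (m + k) + 1} : Finset ℕ)
    rw [Finset.set_biInter_insert, Finset.set_biInter_singleton] at h
    rw [Finset.prod_insert hne, Finset.prod_singleton] at h
    rw [hSdef]
    simp only
    rw [h, hWp _ (by omega), hWp _ (by omega), ENNReal.ofReal_mul hp.le]
  have hSkc : ∀ k, μ ((S k)ᶜ) = qe := by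
    intro k
    rw [measure_compl (hSm k) (measure_ne_top μ _), hSk k, measure_univ, hqedef, hq₀def,
      ENNReal.ofReal_sub _ (by positivity), ENNReal.ofReal_one]
  -- the "no success up to k" events
  set B : ℕ → Set Ω := fun k => ⋂ j ∈ Finset.range (k + 1), (S j)ᶜ with hBdef
  have hBm : ∀ k, MeasurableSet (B k) :=
    fun k => Finset.measurableSet_biInter _ fun j _ => (hSm j).compl
  -- independence step
  have hstep : ∀ n, μ (B n ∩ (S (n + 1))ᶜ) = μ (B n) * μ ((S (n + 1))ᶜ) := by
    intro n
    set Sidx : Set ℕ := {i | i < 2 * (m + (n + 1))} with hSidx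
    set Tidx : Set ℕ := {2 * (m + (n + 1)), 2 * (m + (n + 1)) + 1} with hTidx
    have hdisj : Disjoint Sidx Tidx := by
      rw [Set.disjoint_left]
      intro i hi hiT
      rw [hSidx] at hi
      rw [hTidx] at hiT
      simp only [Set.mem_insert_iff, Set.mem_singleton_iff] at hiT
      simp only [Set.mem_setOf_eq] at hi
      omega
    have hindep := iIndepSet.indep_generateFrom_of_disjoint hAm hInd Sidx Tidx hdisj
    have hgen : ∀ (I : Set ℕ) (i : ℕ), i ∈ I →
        MeasurableSet[MeasurableSpace.generateFrom {t | ∃ n ∈ I, {ω | n ∈ A ω} = t}]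
          {ω | i ∈ A ω} :=
      fun I i hi => MeasurableSpace.measurableSet_generateFrom ⟨i, hi, rfl⟩
    have hB : MeasurableSet[MeasurableSpace.generateFrom
        {t | ∃ n ∈ Sidx, {ω | n ∈ A ω} = t}] (B n) := by
      apply Finset.measurableSet_biInter
      intro j hj
      rw [Finset.mem_range] at hj
      exact ((hgen Sidx _ (by simp [hSidx]; omega)).inter
        (hgen Sidx _ (by simp [hSidx]; omega))).compl
    have hT : MeasurableSet[MeasurableSpace.generateFrom
        {t | ∃ k ∈ Tidx, {ω | k ∈ A ω} = t}] ((S (n + 1))ᶜ) := by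
      exact ((hgen Tidx _ (by simp [hTidx])).inter (hgen Tidx _ (by simp [hTidx]))).compl
    rw [Indep_iff] at hindep
    exact hindep _ _ hB hT
  -- geometric bound on B k
  have hBk : ∀ k, μ (B k) ≤ qe ^ (k + 1) := by
    intro k
    induction k with
    | zero =>
      have hB0 : B 0 = (S 0)ᶜ := by
        rw [hBdef]; simp
      rw [hB0, hSkc 0, pow_one]
    | succ n ih =>
      have hBsucc : B (n + 1) = B n ∩ (S (n + 1))ᶜ := by
        rw [hBdef]
        simp only
        rw [Finset.range_add_one, Finset.set_biInter_insert]
        exact Set.inter_comm _ _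
      rw [hBsucc, hstep n, hSkc (n + 1), pow_succ]
      exact mul_le_mul' ih le_rfl
  -- almost-everywhere existence of a success
  set N : Set Ω := ⋂ k, B k with hNdef
  have hN0 : μ N = 0 := by
    have hle : ∀ k : ℕ, μ N ≤ qe ^ k := by
      intro k
      calc μ N ≤ μ (B k) := measure_mono (Set.iInter_subset _ k)
        _ ≤ qe ^ (k + 1) := hBk k
        _ ≤ qe ^ k := pow_le_pow_of_le_one zero_le hqe1.le (by omega)
    have htend := ENNReal.tendsto_pow_atTop_nhds_zero_of_lt_one hqe1
    exact le_antisymm (ge_of_tendsto' htend hle) zero_le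
  clear_value f S B N q₀ qe
  have hterm_nonneg : ∀ j : ℕ, (0:ℝ) ≤ (2 * (j : ℝ) + 1) * q₀ ^ (j + 1) :=
    fun j => mul_nonneg (by positivity) (pow_nonneg hq0 _)
  -- dominating function
  set ind : ℕ → Ω → ℝ≥0∞ := fun j => (B j).indicator (fun _ => ((2 * j + 1 : ℕ) : ℝ≥0∞))
    with hinddef
  have hindm : ∀ j, Measurable (ind j) := fun j => measurable_const.indicator (hBm j)
  set G : Ω → ℝ≥0∞ := fun ω => ((8 * m ^ 2 : ℕ) : ℝ≥0∞) + 8 * ∑' j, ind j ω with hGdef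
  have hGm : Measurable G := by
    exact Measurable.add measurable_const ((Measurable.ennreal_tsum hindm).const_mul 8)
  have hsum_int : ∫⁻ ω, ∑' j, ind j ω ∂μ = ∑' j, ((2 * j + 1 : ℕ) : ℝ≥0∞) * μ (B j) := by
    rw [lintegral_tsum fun j => (hindm j).aemeasurable]
    congr 1
    ext j
    rw [hinddef]
    simp only
    rw [lintegral_indicator_const (hBm j)]
  -- real geometric sum bounds
  have hq0' : q₀ < 1 := by rw [hq₀def]; nlinarith
  have hqabs : ‖q₀‖ < 1 := by rw [Real.norm_eq_abs, abs_of_nonneg hq0]; exact hq0'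
  have hsumn : Summable (fun n : ℕ => (n : ℝ) * q₀ ^ n) := by
    simpa using summable_pow_mul_geometric_of_norm_lt_one 1 hqabs
  have hsum2 : Summable (fun j : ℕ => 2 * ((j : ℝ) + 1) * q₀ ^ (j + 1)) := by
    have h1 : Summable (fun j : ℕ => ((j + 1 : ℕ) : ℝ) * q₀ ^ (j + 1)) :=
      (summable_nat_add_iff 1).2 hsumn
    apply (h1.mul_left 2).congr
    intro j; push_cast; ring
  have hsum1 : Summable (fun j : ℕ => (2 * (j : ℝ) + 1) * q₀ ^ (j + 1)) := by
    apply Summable.of_nonneg_of_le hterm_nonneg _ hsum2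
    intro j
    have hqj : (0:ℝ) ≤ q₀ ^ (j + 1) := pow_nonneg hq0 _
    nlinarith [hqj]
  have htsum_le : ∑' j : ℕ, (2 * (j : ℝ) + 1) * q₀ ^ (j + 1) ≤ 2 / p ^ 4 := by
    have h1 : ∑' j : ℕ, (2 * (j : ℝ) + 1) * q₀ ^ (j + 1)
        ≤ ∑' j : ℕ, 2 * ((j : ℝ) + 1) * q₀ ^ (j + 1) := by
      apply Summable.tsum_le_tsum _ hsum1 hsum2
      intro j
      have hqj : (0:ℝ) ≤ q₀ ^ (j + 1) := pow_nonneg hq0 _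
      nlinarith [hqj]
    have h2 : ∑' j : ℕ, 2 * ((j : ℝ) + 1) * q₀ ^ (j + 1) = 2 * ∑' n : ℕ, (n : ℝ) * q₀ ^ n := by
      rw [hsumn.tsum_eq_zero_add]
      simp only [Nat.cast_zero, zero_mul, zero_add]
      rw [← tsum_mul_left]
      exact tsum_congr fun j => by push_cast; ring
    have h3 : ∑' n : ℕ, (n : ℝ) * q₀ ^ n = q₀ / (1 - q₀) ^ 2 :=
      tsum_coe_mul_geometric_of_norm_lt_one hqabs
    have h4 : (1 : ℝ) - q₀ = p * p := by rw [hq₀def]; ring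
    have hp4 : (0:ℝ) < p ^ 4 := by positivity
    have h5 : q₀ / (1 - q₀) ^ 2 ≤ 1 / p ^ 4 := by
      rw [h4, show ((p * p) ^ 2 : ℝ) = p ^ 4 from by ring]
      exact div_le_div_of_nonneg_right hq0'.le hp4.le
    calc ∑' j : ℕ, (2 * (j : ℝ) + 1) * q₀ ^ (j + 1)
        ≤ 2 * ∑' n : ℕ, (n : ℝ) * q₀ ^ n := h1.trans_eq h2
      _ = 2 * (q₀ / (1 - q₀) ^ 2) := by rw [h3]
      _ ≤ 2 * (1 / p ^ 4) := by nlinarith [h5]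
      _ = 2 / p ^ 4 := by ring
  -- ENNReal sum bound
  have hENN : ∑' j, ((2 * j + 1 : ℕ) : ℝ≥0∞) * μ (B j) ≤ ENNReal.ofReal (2 / p ^ 4) := by
    calc ∑' j, ((2 * j + 1 : ℕ) : ℝ≥0∞) * μ (B j)
        ≤ ∑' j : ℕ, ENNReal.ofReal ((2 * (j : ℝ) + 1) * q₀ ^ (j + 1)) := by
          apply ENNReal.tsum_le_tsum
          intro j
          calc ((2 * j + 1 : ℕ) : ℝ≥0∞) * μ (B j)
              ≤ ((2 * j + 1 : ℕ) : ℝ≥0∞) * qe ^ (j + 1) := mul_le_mul_right (hBk j) _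
            _ = ENNReal.ofReal ((2 * (j : ℝ) + 1) * q₀ ^ (j + 1)) := by
                rw [hqedef, ← ENNReal.ofReal_pow hq0, ← ENNReal.ofReal_natCast (2 * j + 1),
                  ← ENNReal.ofReal_mul (by positivity)]
                congr 1
                push_cast
                ring
      _ = ENNReal.ofReal (∑' j : ℕ, (2 * (j : ℝ) + 1) * q₀ ^ (j + 1)) :=
          (ENNReal.ofReal_tsum_of_nonneg hterm_nonneg hsum1).symm
      _ ≤ ENNReal.ofReal (2 / p ^ 4) := ENNReal.ofReal_le_ofReal htsum_le
  -- lintegral of G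
  have hGint : ∫⁻ ω, G ω ∂μ ≤ ((8 * m ^ 2 : ℕ) : ℝ≥0∞) + 8 * ENNReal.ofReal (2 / p ^ 4) := by
    rw [hGdef]
    simp only
    rw [lintegral_add_left measurable_const,
      lintegral_const_mul 8 (Measurable.ennreal_tsum hindm), lintegral_const, measure_univ,
      mul_one, hsum_int]
    exact add_le_add_right (mul_le_mul_right hENN 8) _
  have hGfin : ((8 * m ^ 2 : ℕ) : ℝ≥0∞) + 8 * ENNReal.ofReal (2 / p ^ 4) ≠ ⊤ := by
    apply ENNReal.add_ne_top.2
    constructor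
    · exact ENNReal.natCast_ne_top _
    · exact ENNReal.mul_ne_top (by norm_num) ENNReal.ofReal_ne_top
  have hGne : ∫⁻ ω, G ω ∂μ ≠ ⊤ := by
    intro hcon
    rw [hcon] at hGint
    exact hGfin (top_le_iff.1 hGint)
  set g : Ω → ℝ := fun ω => (G ω).toReal with hgdef
  have hgint : Integrable g μ := integrable_toReal_of_lintegral_ne_top hGm.aemeasurable hGne
  -- almost-everywhere pointwise bound
  have hae : ∀ᵐ ω ∂μ, f ω ≤ g ω := by
    have h1 : ∀ᵐ ω ∂μ, G ω < ⊤ := ae_lt_top hGm hGne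
    have h2 : ∀ᵐ ω ∂μ, ω ∉ N := by
      rw [ae_iff]
      have hset : {ω | ¬ ω ∉ N} = N := by ext ω; simp
      rw [hset]
      exact hN0
    filter_upwards [h1, h2] with ω hGω hωN
    have hex : {k : ℕ | ω ∈ S k}.Nonempty := by
      by_contra hcon
      apply hωN
      rw [hNdef]
      refine Set.mem_iInter.2 fun k => ?_
      rw [hBdef]
      refine Set.mem_iInter₂.2 fun j _ => ?_
      intro hSj
      exact hcon ⟨j, hSj⟩
    set K := sInf {k : ℕ | ω ∈ S k} with hKdef
    have hKS : ω ∈ S K := Nat.sInf_mem hex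
    rw [hSdef] at hKS
    simp only [Set.mem_inter_iff, Set.mem_setOf_eq] at hKS
    obtain ⟨hKa, hKb⟩ := hKS
    have hKmin : ∀ j < K, ω ∉ S j := fun j hj => Nat.notMem_of_lt_sInf hj
    have hBj : ∀ j, j < K → ω ∈ B j := by
      intro j hj
      rw [hBdef]
      refine Set.mem_iInter₂.2 fun i hi => ?_
      have hiK : i < K := by rw [Finset.mem_range] at hi; omega
      exact hKmin i hiK
    set v := m + K with hvdef
    -- Frobenius-type bound
    have hfv : f ω ≤ ((2 * v * (2 * v) : ℕ) : ℝ) := by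
      have hz : (sSup (insert (-1) ((fun n : ℕ => (n : ℤ)) ''
          ((AddSubmonoid.closure (A ω ∩ Set.Ici u) : Set ℕ))ᶜ)) : ℤ)
          ≤ ((2 * v * (2 * v) : ℕ) : ℤ) := by
        apply csSup_le ⟨-1, Set.mem_insert _ _⟩
        intro x hx
        rcases Set.mem_insert_iff.1 hx with h | h
        · rw [h]
          exact le_trans (by norm_num : (-1:ℤ) ≤ 0) (Int.ofNat_nonneg _)
        · obtain ⟨n, hn, rfl⟩ := h
          by_contra hcon
          push_neg at hcon
          have hnn : 2 * v * (2 * v) ≤ n := by exact_mod_cast hcon.le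
          apply hn
          apply nugget (by omega) ?_ ?_ hnn
          · exact ⟨hKa, by simp only [Set.mem_Ici]; omega⟩
          · exact ⟨hKb, by simp only [Set.mem_Ici]; omega⟩
      simp only [hf]
      exact_mod_cast hz
    -- from the Nat bound to toReal of G
    have hEbound : ((8 * m ^ 2 + 8 * K ^ 2 : ℕ) : ℝ≥0∞) ≤ G ω := by
      rw [hGdef]
      simp only
      have hKsq : ((K ^ 2 : ℕ) : ℝ≥0∞) ≤ ∑' j, ind j ω := by
        have hval : ∀ j ∈ Finset.range K, ind j ω = ((2 * j + 1 : ℕ) : ℝ≥0∞) := by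
          intro j hj
          rw [hinddef]
          simp only
          rw [Set.indicator_of_mem (hBj j (Finset.mem_range.1 hj))]
        have hpart : ∑ j ∈ Finset.range K, ind j ω = ((K ^ 2 : ℕ) : ℝ≥0∞) := by
          rw [Finset.sum_congr rfl hval]
          rw [show (K ^ 2 : ℕ) = K * K from by ring, ← sum_odd_eq_sq K]
          push_cast
          ring
        rw [← hpart]
        exact ENNReal.sum_le_tsum _
      calc ((8 * m ^ 2 + 8 * K ^ 2 : ℕ) : ℝ≥0∞)
          = ((8 * m ^ 2 : ℕ) : ℝ≥0∞) + 8 * ((K ^ 2 : ℕ) : ℝ≥0∞) := by push_cast; ring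
        _ ≤ ((8 * m ^ 2 : ℕ) : ℝ≥0∞) + 8 * ∑' j, ind j ω :=
            add_le_add_right (mul_le_mul_right hKsq 8) _
    have htr : ((8 * m ^ 2 + 8 * K ^ 2 : ℕ) : ℝ) ≤ (G ω).toReal := by
      have h := ENNReal.toReal_mono hGω.ne hEbound
      rwa [ENNReal.toReal_natCast] at h
    have hnat : (2 * v * (2 * v) : ℕ) ≤ 8 * m ^ 2 + 8 * K ^ 2 := by
      rw [hvdef]
      zify
      nlinarith [sq_nonneg ((m : ℤ) - K)]
    calc f ω ≤ ((2 * v * (2 * v) : ℕ) : ℝ) := hfv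
      _ ≤ ((8 * m ^ 2 + 8 * K ^ 2 : ℕ) : ℝ) := by exact_mod_cast hnat
      _ ≤ (G ω).toReal := htr
  -- final assembly
  by_cases hfint : Integrable f μ
  · have hmono := integral_mono_ae hfint hgint hae
    refine hmono.trans ?_
    have hint_g : ∫ ω, g ω ∂μ = (∫⁻ ω, G ω ∂μ).toReal :=
      integral_toReal hGm.aemeasurable (ae_lt_top hGm hGne)
    rw [hint_g]
    have h1 : (∫⁻ ω, G ω ∂μ).toReal
        ≤ (((8 * m ^ 2 : ℕ) : ℝ≥0∞) + 8 * ENNReal.ofReal (2 / p ^ 4)).toReal :=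
      ENNReal.toReal_mono hGfin hGint
    refine h1.trans ?_
    rw [ENNReal.toReal_add (ENNReal.natCast_ne_top _)
        (ENNReal.mul_ne_top (by norm_num) ENNReal.ofReal_ne_top),
      ENNReal.toReal_mul, ENNReal.toReal_natCast,
      ENNReal.toReal_ofReal (by positivity), ENNReal.toReal_ofNat]
    have hu2 : (u : ℝ) = 2 * m := by rw [hm]; push_cast; ring
    have hzp : p ^ (-4 : ℤ) = (p ^ 4)⁻¹ := by
      rw [show (-4 : ℤ) = -(4 : ℕ) from by norm_num, zpow_neg, zpow_natCast]
    rw [hu2, hzp]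
    have hp4 : (0:ℝ) < p ^ 4 := by positivity
    have hinv : (0:ℝ) < (p ^ 4)⁻¹ := by positivity
    push_cast
    rw [div_eq_mul_inv]
    nlinarith [sq_nonneg (m : ℝ), hinv]
  · rw [integral_undef hfint]
    exact htarget
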